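/- Key identity in the proof of Theorem A: let μ be the Gibbs measure of f on a finite product space, and 𝒫 any partition of ∏ᵢKᵢ. Then DTC(μ) + Σ_{P∈𝒫} μ(P) ∫ D(μ|_P ‖ ξ_{∇f(y,·)}) μ|_P(dy) = H_μ(𝒫) + Σ_P μ(P) ∫∫ (∇f(y,y) - ∇f(x,y)) μ|_P(dy) μ|_P(dx). -/

import Mathlib

open Real Finset

/-- A probability mass function on a finite type. -/
def IsPMF {α : Type*} [Fintype α] (μ : α → ℝ) : Prop :=
  (∀ x, 0 ≤ μ x) ∧ ∑ x, μ x = 1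

/-- Kullback–Leibler divergence. -/
noncomputable def KL {α : Type*} [Fintype α] (μ γ : α → ℝ) : ℝ :=
  ∑ x, μ x * Real.log (μ x / γ x)

/-- The Gibbs measure of the potential `f` relative to the reference measure `l`. -/
noncomputable def gibbs {α : Type*} [Fintype α] (f : α → ℝ) (l : α → ℝ) : α → ℝ :=
  fun x => Real.exp (f x) * l x / ∑ y, Real.exp (f y) * l y

/-- Product of the measures `l i` on the product space. -/
noncomputable def prodMeas {n : ℕ} {K : Fin n → Type*} [∀ i, Fintype (K i)]
    (l : ∀ i, K i → ℝ) : (∀ i, K i) → ℝ :=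
  fun x => ∏ i, l i (x i)

/-- Discrete partial derivative `∂ᵢf(x,y)` with reference points `star`. -/
noncomputable def dpart {n : ℕ} {K : Fin n → Type*} (f : (∀ i, K i) → ℝ)
    (star : ∀ i, K i) (i : Fin n) (x : ∀ j, K j) (y : K i) : ℝ :=
  f (Function.update x i y) - f (Function.update x i (star i))

/-- Discrete gradient `∇f(x,y) = Σᵢ ∂ᵢf(x,yᵢ)` with reference points `star`. -/
noncomputable def dgrad {n : ℕ} {K : Fin n → Type*} (f : (∀ i, K i) → ℝ)
    (star : ∀ i, K i) (x y : ∀ i, K i) : ℝ :=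
  ∑ i, dpart f star i x (y i)

/-- The product Gibbs measure `ξ_{∇f(x,·)} = ∏ᵢ ξ_{∂ᵢf(x,·)}` of the additively
separable potential `∇f(x,·)`. -/
noncomputable def xiGrad {n : ℕ} {K : Fin n → Type*} [∀ i, Fintype (K i)]
    (f : (∀ i, K i) → ℝ) (star : ∀ i, K i) (l : ∀ i, K i → ℝ) (x : ∀ i, K i) :
    (∀ i, K i) → ℝ :=
  fun y => ∏ i, gibbs (dpart f star i x) (l i) (y i)

/-- Shannon entropy of a probability mass function. -/
noncomputable def ent {α : Type*} [Fintype α] (μ : α → ℝ) : ℝ :=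
  -∑ x, μ x * Real.log (μ x)

/-- Glue a value `y` in coordinate `i` to a configuration `z` of the remaining coordinates. -/
def glue {n : ℕ} {K : Fin n → Type*} (i : Fin n)
    (z : (j : {j : Fin n // j ≠ i}) → K j.1) (y : K i) : ∀ j, K j :=
  fun j => if h : j = i then cast (congrArg K h.symm) y else z ⟨j, h⟩

/-- Marginal of a measure on `∏ j, K j` on the coordinates other than `i`. -/
noncomputable def margRest {n : ℕ} {K : Fin n → Type*} [∀ i, Fintype (K i)]
    (μ : (∀ j, K j) → ℝ) (i : Fin n) : ((j : {j : Fin n // j ≠ i}) → K j.1) → ℝ :=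
  fun z => ∑ y : K i, μ (glue i z y)

/-- Dual total correlation: `DTC(μ) = H(μ) - Σᵢ H_μ(xᵢ | x_{[n]∖i})`, where the
conditional entropy is `H(μ) - H(margRest μ i)`. -/
noncomputable def DTC {n : ℕ} {K : Fin n → Type*} [∀ i, Fintype (K i)]
    (μ : (∀ j, K j) → ℝ) : ℝ :=
  ent μ - ∑ i, (ent μ - ent (margRest μ i))

/-- Mass of the cell labelled `j` of the partition given by the labelling `c`. -/
noncomputable def cellMass {α : Type*} [Fintype α] {I : Type*} [Fintype I] [DecidableEq I]
    (μ : α → ℝ) (c : α → I) (j : I) : ℝ :=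
  ∑ x, if c x = j then μ x else 0

/-- The measure `μ` conditioned on the cell labelled `j`. -/
noncomputable def condMeas {α : Type*} [Fintype α] {I : Type*} [Fintype I] [DecidableEq I]
    (μ : α → ℝ) (c : α → I) (j : I) : α → ℝ :=
  fun x => if c x = j then μ x / cellMass μ c j else 0

/-- Shannon entropy of the partition given by the labelling `c`, under `μ`. -/
noncomputable def partEnt {α : Type*} [Fintype α] {I : Type*} [Fintype I] [DecidableEq I]
    (μ : α → ℝ) (c : α → I) : ℝ :=
  -∑ j, cellMass μ c j * Real.log (cellMass μ c j)


section aux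
variable {n : ℕ} {K : Fin n → Type*} [∀ i, Fintype (K i)]

lemma glue_same (i : Fin n) (z : (j : {j : Fin n // j ≠ i}) → K j.1) (u : K i) :
    glue i z u i = u := by simp [glue]

lemma glue_ne (i : Fin n) (z : (j : {j : Fin n // j ≠ i}) → K j.1) (u : K i)
    {j : Fin n} (h : j ≠ i) : glue i z u j = z ⟨j, h⟩ := by simp [glue, h]

lemma glue_restrict (i : Fin n) (x : ∀ j, K j) :
    glue i (fun j => x j.1) (x i) = x := by
  funext j
  by_cases h : j = i
  · subst h; simp [glue]
  · simp [glue, h]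

lemma glue_eq_update (i : Fin n) (x : ∀ j, K j) (u : K i) :
    glue i (fun j => x j.1) u = Function.update x i u := by
  funext j
  by_cases h : j = i
  · subst h; simp [glue]
  · simp [glue, h, Function.update_of_ne h]

lemma update_glue (i : Fin n) (z : (j : {j : Fin n // j ≠ i}) → K j.1) (u u' : K i) :
    Function.update (glue i z u) i u' = glue i z u' := by
  funext j
  by_cases h : j = i
  · subst h; simp [glue]
  · simp [glue, h, Function.update_of_ne h]

lemma restrict_glue (i : Fin n) (z : (j : {j : Fin n // j ≠ i}) → K j.1) (u : K i) :
    (fun j : {j : Fin n // j ≠ i} => glue i z u j.1) = z := by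
  funext j; exact glue_ne i z u j.2

noncomputable def splitEquiv (i : Fin n) :
    ((∀ j : {j : Fin n // j ≠ i}, K j.1) × K i) ≃ (∀ j, K j) where
  toFun p := glue i p.1 p.2
  invFun x := (fun j => x j.1, x i)
  left_inv p := by
    obtain ⟨z, u⟩ := p
    simp only [Prod.mk.injEq]
    exact ⟨restrict_glue i z u, glue_same i z u⟩
  right_inv x := glue_restrict i x

lemma sum_split (i : Fin n) (F : (∀ j, K j) → ℝ) :
    ∑ x, F x = ∑ z, ∑ u, F (glue i z u) := by
  rw [← Equiv.sum_comp (splitEquiv (K := K) i) F, Fintype.sum_prod_type]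
  rfl

end aux

section aux2
variable {n : ℕ} {K : Fin n → Type*} [∀ i, Fintype (K i)] [∀ i, Nonempty (K i)]

noncomputable def Zi (f : (∀ i, K i) → ℝ) (star : ∀ i, K i) (l : ∀ i, K i → ℝ)
    (i : Fin n) (x : ∀ j, K j) : ℝ :=
  ∑ u, Real.exp (dpart f star i x u) * l i u

noncomputable def Ls (l : ∀ i, K i → ℝ) (x : ∀ j, K j) : ℝ := ∑ i, Real.log (l i (x i))

noncomputable def Ws (f : (∀ i, K i) → ℝ) (star : ∀ i, K i) (l : ∀ i, K i → ℝ)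
    (x : ∀ j, K j) : ℝ := ∑ i, Real.log (Zi f star l i x)

variable {l : ∀ i, K i → ℝ} (hlpos : ∀ i x, 0 < l i x)
  {f : (∀ i, K i) → ℝ} (star : ∀ i, K i)

include hlpos

lemma Zi_pos (i : Fin n) (x : ∀ j, K j) : 0 < Zi f star l i x :=
  Finset.sum_pos (fun u _ => mul_pos (Real.exp_pos _) (hlpos i u)) univ_nonempty

lemma gibbs_dpart_pos (i : Fin n) (x : ∀ j, K j) (v : K i) :
    0 < gibbs (dpart f star i x) (l i) v :=
  div_pos (mul_pos (Real.exp_pos _) (hlpos i v)) (Zi_pos hlpos star i x)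

lemma xiGrad_pos (y x : ∀ j, K j) : 0 < xiGrad f star l y x :=
  Finset.prod_pos fun i _ => gibbs_dpart_pos hlpos star i y (x i)

lemma log_xiGrad (y x : ∀ j, K j) :
    Real.log (xiGrad f star l y x) = dgrad f star y x + Ls l x - Ws f star l y := by
  rw [xiGrad, Real.log_prod (fun i _ => (gibbs_dpart_pos hlpos star i y (x i)).ne')]
  rw [dgrad, Ls, Ws, ← Finset.sum_add_distrib, ← Finset.sum_sub_distrib]
  refine Finset.sum_congr rfl fun i _ => ?_
  have hg : gibbs (dpart f star i y) (l i) (x i)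
      = Real.exp (dpart f star i y (x i)) * l i (x i) / Zi f star l i y := rfl
  rw [hg, Real.log_div (mul_pos (Real.exp_pos _) (hlpos i (x i))).ne'
      (Zi_pos hlpos star i y).ne', Real.log_mul (Real.exp_pos _).ne' (hlpos i (x i)).ne',
      Real.log_exp]

lemma prodMeas_pos (x : ∀ j, K j) : 0 < prodMeas l x :=
  Finset.prod_pos fun i _ => hlpos i (x i)

lemma prodMeas_update (i : Fin n) (x : ∀ j, K j) (u : K i) :
    prodMeas l (Function.update x i u) * l i (x i) = prodMeas l x * l i u := by
  have h : (fun j => l j (Function.update x i u j))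
      = Function.update (fun j => l j (x j)) i (l i u) := by
    funext j
    by_cases hj : j = i
    · subst hj; simp
    · simp [hj, Function.update_of_ne hj]
  rw [prodMeas, prodMeas, h,
    Finset.prod_update_of_mem (Finset.mem_univ i),
    ← Finset.mul_prod_erase univ (fun j => l j (x j)) (Finset.mem_univ i),
    ← Finset.erase_eq]
  ring

end aux2

section aux3
variable {n : ℕ} {K : Fin n → Type*} [∀ i, Fintype (K i)] [∀ i, Nonempty (K i)]
  {l : ∀ i, K i → ℝ} (hlpos : ∀ i x, 0 < l i x)
  {f : (∀ i, K i) → ℝ} (star : ∀ i, K i)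
  {μ : (∀ i, K i) → ℝ} (hμ : μ = gibbs f (prodMeas l))

include hlpos hμ

lemma Znorm_pos : 0 < ∑ x : ∀ i, K i, Real.exp (f x) * prodMeas l x :=
  Finset.sum_pos (fun x _ => mul_pos (Real.exp_pos _) (prodMeas_pos hlpos x)) univ_nonempty

lemma mu_pos (x : ∀ i, K i) : 0 < μ x := by
  rw [hμ]
  exact div_pos (mul_pos (Real.exp_pos _) (prodMeas_pos hlpos x)) (Znorm_pos hlpos hμ)

lemma mu_sum_one : ∑ x, μ x = 1 := by
  rw [hμ]
  simp only [gibbs]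
  rw [← Finset.sum_div, div_self (Znorm_pos hlpos hμ).ne']

/-- the termwise multiplicative identity -/
lemma term_identity (i : Fin n) (x : ∀ j, K j) (u : K i) :
    Real.exp (f x) * prodMeas l x * (Real.exp (dpart f star i x u) * l i u)
      = Real.exp (f (Function.update x i u)) * prodMeas l (Function.update x i u) *
        (Real.exp (dpart f star i x (x i)) * l i (x i)) := by
  have hP := prodMeas_update (l := l) hlpos i x u
  rw [dpart, dpart, Function.update_eq_self, Real.exp_sub, Real.exp_sub]
  field_simp
  linear_combination -hP

/-- multiplicative identity: μ(x) * Zi(x) = M(x) * e^{∂ᵢf(x,xᵢ)} l_i(xᵢ) -/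
lemma mult_identity (i : Fin n) (x : ∀ j, K j) :
    μ x * Zi f star l i x
      = (∑ u, μ (Function.update x i u)) *
        (Real.exp (dpart f star i x (x i)) * l i (x i)) := by
  rw [hμ, Zi]
  simp only [gibbs]
  rw [Finset.mul_sum, Finset.sum_mul]
  refine Finset.sum_congr rfl fun u _ => ?_
  rw [div_mul_eq_mul_div, div_mul_eq_mul_div]
  rw [term_identity hlpos star hμ i x u]

lemma entropy_diff (i : Fin n) :
    ent (margRest μ i) - ent μ
      = ∑ x, μ x * (dpart f star i x (x i) + Real.log (l i (x i))
          - Real.log (Zi f star l i x)) := by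
  classical
  set M : (∀ j, K j) → ℝ := fun x => ∑ u, μ (Function.update x i u) with hM
  have hMpos : ∀ x, 0 < M x :=
    fun x => Finset.sum_pos (fun u _ => mu_pos hlpos hμ _) univ_nonempty
  have hmglue : ∀ z (u : K i), margRest μ i z = M (glue i z u) := by
    intro z u
    simp only [hM, margRest]
    exact Finset.sum_congr rfl fun u' _ => by rw [update_glue]
  have hsum : ∑ z, margRest μ i z * Real.log (margRest μ i z)
      = ∑ x, μ x * Real.log (M x) := by
    rw [sum_split i (fun x => μ x * Real.log (M x))]
    refine Finset.sum_congr rfl fun z _ => ?_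
    rw [margRest, Finset.sum_mul]
    refine Finset.sum_congr rfl fun u _ => ?_
    rw [← hmglue z u, margRest]
  have hpt : ∀ x, Real.log (μ x) - Real.log (M x)
      = dpart f star i x (x i) + Real.log (l i (x i)) - Real.log (Zi f star l i x) := by
    intro x
    have h1 := mult_identity hlpos star hμ i x
    have h2 : Real.log (μ x * Zi f star l i x)
        = Real.log (M x * (Real.exp (dpart f star i x (x i)) * l i (x i))) := by rw [h1]
    rw [Real.log_mul (mu_pos hlpos hμ x).ne' (Zi_pos hlpos star i x).ne',
        Real.log_mul (hMpos x).ne' (mul_pos (Real.exp_pos _) (hlpos i (x i))).ne',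
        Real.log_mul (Real.exp_pos _).ne' (hlpos i (x i)).ne', Real.log_exp] at h2
    linarith
  rw [ent, ent, hsum, neg_sub_neg, ← Finset.sum_sub_distrib]
  refine Finset.sum_congr rfl fun x _ => ?_
  rw [← hpt x]
  ring

lemma DTC_formula :
    DTC μ = ent μ + ∑ x, μ x * (dgrad f star x x + Ls l x - Ws f star l x) := by
  rw [DTC]
  have : ∑ i, (ent μ - ent (margRest μ i)) = -∑ i, (ent (margRest μ i) - ent μ) := by
    rw [← Finset.sum_neg_distrib]
    exact Finset.sum_congr rfl fun i _ => by ring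
  rw [this]
  have h2 : ∑ i, (ent (margRest μ i) - ent μ)
      = ∑ x, μ x * (dgrad f star x x + Ls l x - Ws f star l x) := by
    rw [Finset.sum_congr rfl fun i _ => entropy_diff hlpos star hμ i]
    rw [Finset.sum_comm]
    refine Finset.sum_congr rfl fun x _ => ?_
    rw [dgrad, Ls, Ws, ← Finset.mul_sum]
    congr 1
    rw [← Finset.sum_add_distrib, ← Finset.sum_sub_distrib]
  rw [h2]; ring

end aux3

/-- The key identity in the proof of Theorem A. -/
theorem key_identity {n : ℕ} (K : Fin n → Type*)
    [∀ i, Fintype (K i)] [∀ i, Nonempty (K i)]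
    (l : ∀ i, K i → ℝ) (hl : ∀ i, IsPMF (l i)) (hlpos : ∀ i x, 0 < l i x)
    (star : ∀ i, K i) (f : (∀ i, K i) → ℝ)
    {I : Type*} [Fintype I] [DecidableEq I] (c : (∀ i, K i) → I)
    (μ : (∀ i, K i) → ℝ) (hμ : μ = gibbs f (prodMeas l)) :
    DTC μ + ∑ j, cellMass μ c j *
        ∑ y, condMeas μ c j y * KL (condMeas μ c j) (xiGrad f star l y)
      = partEnt μ c + ∑ j, cellMass μ c j *
          ∑ x, ∑ y, condMeas μ c j x * condMeas μ c j y *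
            (dgrad f star y y - dgrad f star x y) := by
  
  classical
  have hμpos : ∀ x, 0 < μ x := mu_pos hlpos hμ
  have hcnn : ∀ j, 0 ≤ cellMass μ c j := fun j =>
    Finset.sum_nonneg fun x _ => by split <;> [exact (hμpos x).le; exact le_refl 0]
  have hcell0 : ∀ j : I, cellMass μ c j = 0 → ∀ x, c x ≠ j := by
    intro j h0 x hcx
    have hnn : ∀ x ∈ (univ : Finset (∀ i, K i)), 0 ≤ (if c x = j then μ x else 0) := by
      intro x _; split
      · exact (hμpos x).le
      · exact le_refl 0
    have hz := (Finset.sum_eq_zero_iff_of_nonneg hnn).1 h0 x (mem_univ x)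
    rw [if_pos hcx] at hz
    exact (hμpos x).ne' hz
  have key : ∀ j : I,
      cellMass μ c j * ∑ y, condMeas μ c j y * KL (condMeas μ c j) (xiGrad f star l y)
      = cellMass μ c j * ∑ x, ∑ y, condMeas μ c j x * condMeas μ c j y *
            (dgrad f star y y - dgrad f star x y)
        + ((∑ x, if c x = j then μ x * Real.log (μ x) else 0)
          - (∑ x, if c x = j then μ x * Ls l x else 0)
          + (∑ x, if c x = j then μ x * Ws f star l x else 0)
          - (∑ x, if c x = j then μ x * dgrad f star x x else 0))
        - cellMass μ c j * Real.log (cellMass μ c j) := by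
    intro j
    by_cases hp : cellMass μ c j = 0
    · have hno := hcell0 j hp
      have hz : ∀ g : (∀ i, K i) → ℝ, ∑ x, (if c x = j then g x else 0) = 0 :=
        fun g => Finset.sum_eq_zero fun x _ => if_neg (hno x)
      rw [hp, hz, hz, hz, hz]; ring
    · have hppos : 0 < cellMass μ c j := lt_of_le_of_ne (hcnn j) (Ne.symm hp)
      have h_nu_sum : ∑ x, condMeas μ c j x = 1 := by
        have he : ∀ x, condMeas μ c j x = (if c x = j then μ x else 0) / cellMass μ c j := by
          intro x
          simp only [condMeas]
          split
          · rfl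
          · rw [zero_div]
        rw [Finset.sum_congr rfl fun x _ => he x, ← Finset.sum_div]
        exact div_self hp
      have h_pnu : ∀ h : (∀ i, K i) → ℝ,
          cellMass μ c j * ∑ x, condMeas μ c j x * h x
            = ∑ x, if c x = j then μ x * h x else 0 := by
        intro h
        rw [Finset.mul_sum]
        refine Finset.sum_congr rfl fun x _ => ?_
        simp only [condMeas]
        split
        · field_simp
        · ring
      have h_plog : cellMass μ c j * ∑ x, condMeas μ c j x * Real.log (condMeas μ c j x)
          = (∑ x, if c x = j then μ x * Real.log (μ x) else 0)
            - cellMass μ c j * Real.log (cellMass μ c j) := by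
        have hpt : ∀ x, cellMass μ c j * (condMeas μ c j x * Real.log (condMeas μ c j x))
            = (if c x = j then μ x * Real.log (μ x) else 0)
              - (if c x = j then μ x else 0) * Real.log (cellMass μ c j) := by
          intro x
          simp only [condMeas]
          split
          · rw [Real.log_div (hμpos x).ne' hp]
            field_simp
          · simp
        calc cellMass μ c j * ∑ x, condMeas μ c j x * Real.log (condMeas μ c j x)
            = ∑ x, cellMass μ c j * (condMeas μ c j x * Real.log (condMeas μ c j x)) := by
              rw [Finset.mul_sum]
          _ = ∑ x, ((if c x = j then μ x * Real.log (μ x) else 0)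
              - (if c x = j then μ x else 0) * Real.log (cellMass μ c j)) :=
              Finset.sum_congr rfl fun x _ => hpt x
          _ = (∑ x, if c x = j then μ x * Real.log (μ x) else 0)
              - (∑ x, if c x = j then μ x else 0) * Real.log (cellMass μ c j) := by
              rw [Finset.sum_sub_distrib, ← Finset.sum_mul]
          _ = _ := rfl
      have hKL : ∀ y, KL (condMeas μ c j) (xiGrad f star l y)
          = (∑ x, condMeas μ c j x * Real.log (condMeas μ c j x))
            - (∑ x, condMeas μ c j x * dgrad f star y x)
            - (∑ x, condMeas μ c j x * Ls l x)
            + Ws f star l y := by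
        intro y
        have hpt : ∀ x, condMeas μ c j x * Real.log (condMeas μ c j x / xiGrad f star l y x)
            = condMeas μ c j x * Real.log (condMeas μ c j x)
              - condMeas μ c j x * dgrad f star y x
              - condMeas μ c j x * Ls l x
              + Ws f star l y * condMeas μ c j x := by
          intro x
          by_cases hx : condMeas μ c j x = 0
          · rw [hx]; ring
          · rw [Real.log_div hx (xiGrad_pos hlpos star y x).ne',
              log_xiGrad hlpos star y x]
            ring
        rw [KL, Finset.sum_congr rfl fun x _ => hpt x,
          Finset.sum_add_distrib, Finset.sum_sub_distrib, Finset.sum_sub_distrib,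
          ← Finset.mul_sum, h_nu_sum, mul_one]
      have hT : ∑ y, condMeas μ c j y * KL (condMeas μ c j) (xiGrad f star l y)
          = (∑ x, condMeas μ c j x * Real.log (condMeas μ c j x))
            - (∑ y, condMeas μ c j y * ∑ x, condMeas μ c j x * dgrad f star y x)
            - (∑ x, condMeas μ c j x * Ls l x)
            + (∑ y, condMeas μ c j y * Ws f star l y) := by
        have hpt : ∀ y, condMeas μ c j y * KL (condMeas μ c j) (xiGrad f star l y)
            = condMeas μ c j y * (∑ x, condMeas μ c j x * Real.log (condMeas μ c j x))
              - condMeas μ c j y * (∑ x, condMeas μ c j x * dgrad f star y x)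
              - condMeas μ c j y * (∑ x, condMeas μ c j x * Ls l x)
              + condMeas μ c j y * Ws f star l y := by
          intro y; rw [hKL y]; ring
        rw [Finset.sum_congr rfl fun y _ => hpt y,
          Finset.sum_add_distrib, Finset.sum_sub_distrib, Finset.sum_sub_distrib,
          ← Finset.sum_mul, ← Finset.sum_mul, h_nu_sum, one_mul, one_mul]
      have hR : ∑ x, ∑ y, condMeas μ c j x * condMeas μ c j y *
            (dgrad f star y y - dgrad f star x y)
          = (∑ y, condMeas μ c j y * dgrad f star y y)
            - (∑ x, condMeas μ c j x * ∑ y, condMeas μ c j y * dgrad f star x y) := by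
        have hpt : ∀ x, ∑ y, condMeas μ c j x * condMeas μ c j y *
              (dgrad f star y y - dgrad f star x y)
            = condMeas μ c j x * (∑ y, condMeas μ c j y * dgrad f star y y)
              - condMeas μ c j x * (∑ y, condMeas μ c j y * dgrad f star x y) := by
          intro x
          rw [Finset.mul_sum, Finset.mul_sum, ← Finset.sum_sub_distrib]
          refine Finset.sum_congr rfl fun y _ => ?_
          ring
        rw [Finset.sum_congr rfl fun x _ => hpt x, Finset.sum_sub_distrib,
          ← Finset.sum_mul, h_nu_sum, one_mul]
      have e1 := h_plog
      have e2 := h_pnu (fun x => Ls l x)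
      have e3 := h_pnu (fun x => Ws f star l x)
      have e4 := h_pnu (fun x => dgrad f star x x)
      rw [hT, hR]
      linear_combination e1 - e2 + e3 - e4
  have hswap : ∀ g : (∀ i, K i) → ℝ,
      ∑ j : I, ∑ x, (if c x = j then g x else 0) = ∑ x, g x := by
    intro g
    rw [Finset.sum_comm]
    refine Finset.sum_congr rfl fun x _ => ?_
    simp
  have hD : DTC μ = ent μ + ∑ x, μ x * (dgrad f star x x + Ls l x - Ws f star l x) :=
    DTC_formula hlpos star hμ
  have hDsplit : ∑ x, μ x * (dgrad f star x x + Ls l x - Ws f star l x)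
      = (∑ x, μ x * dgrad f star x x) + (∑ x, μ x * Ls l x) - (∑ x, μ x * Ws f star l x) := by
    rw [← Finset.sum_add_distrib, ← Finset.sum_sub_distrib]
    refine Finset.sum_congr rfl fun x _ => ?_
    ring
  have hPE : ∑ j, cellMass μ c j * Real.log (cellMass μ c j) = -partEnt μ c := by
    rw [partEnt, neg_neg]
  have hent : ent μ = -∑ x, μ x * Real.log (μ x) := rfl
  rw [Finset.sum_congr rfl fun j (_ : j ∈ univ) => key j]
  simp only [Finset.sum_sub_distrib, Finset.sum_add_distrib]
  rw [hswap (fun x => μ x * Real.log (μ x)), hswap (fun x => μ x * Ls l x),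
    hswap (fun x => μ x * Ws f star l x), hswap (fun x => μ x * dgrad f star x x), hPE]
  linarith [hD, hDsplit, hent]
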